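/- Let τ>0, let g : ℝ → ℝ be increasing and continuous, and let T>0. Let u, v : [−τ,T] → ℝ be continuous functions, differentiable on (0,T), such that u'(t) ≤ g(u(t−τ)) − u(t) and v'(t) ≥ g(v(t−τ)) − v(t) for all t ∈ (0,T). If u(θ) ≤ v(θ) for all θ ∈ [−τ,0], then u(t) ≤ v(t) for all t ∈ [−τ,T]. -/

import Mathlib

open Set Filter
open scoped Topology

/-- Comparison principle for the scalar delay differential equation
`v'(t) = g(v(t−τ)) − v(t)` with increasing continuous nonlinearity `g`. -/
theorem stmt_1 (τ T : ℝ) (hτ : 0 < τ) (hT : 0 < T)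
    (g : ℝ → ℝ) (hg : StrictMono g) (hgc : Continuous g)
    (u v : ℝ → ℝ)
    (hu_cont : ContinuousOn u (Icc (-τ) T)) (hv_cont : ContinuousOn v (Icc (-τ) T))
    (hu_diff : ∀ t ∈ Ioo 0 T, DifferentiableAt ℝ u t)
    (hv_diff : ∀ t ∈ Ioo 0 T, DifferentiableAt ℝ v t)
    (hsub : ∀ t ∈ Ioo 0 T, deriv u t ≤ g (u (t - τ)) - u t)
    (hsup : ∀ t ∈ Ioo 0 T, g (v (t - τ)) - v t ≤ deriv v t)
    (hinit : ∀ θ ∈ Icc (-τ) 0, u θ ≤ v θ) :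
    ∀ t ∈ Icc (-τ) T, u t ≤ v t := by
  -- Key step : extend nonnegativity by one delay length.
  have key : ∀ a : ℝ, 0 ≤ a → (∀ s ∈ Icc (-τ) T, s ≤ a → u s ≤ v s) →
      ∀ t ∈ Icc (-τ) T, t ≤ a + τ → u t ≤ v t := by
    intro a ha hyp t ht hta
    by_cases hcase : t ≤ a
    · exact hyp t ht hcase
    push_neg at hcase
    have htT : t ≤ T := ht.2
    have haT : a ≤ T := le_of_lt (lt_of_lt_of_le hcase htT)
    set f : ℝ → ℝ := fun s => Real.exp s * (u s - v s) with hf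
    have hsub' : Icc a t ⊆ Icc (-τ) T := by
      intro s hs
      exact ⟨le_trans (by linarith) hs.1, le_trans hs.2 htT⟩
    have hfc : ContinuousOn f (Icc a t) := by
      apply ContinuousOn.mul (Real.continuous_exp.continuousOn)
      exact ((hu_cont.mono hsub').sub (hv_cont.mono hsub'))
    have hint : interior (Icc a t) ⊆ Ioo 0 T := by
      rw [interior_Icc]
      intro s hs
      exact ⟨lt_of_le_of_lt ha hs.1, lt_of_lt_of_le hs.2 htT⟩
    have hderiv : ∀ s ∈ interior (Icc a t),
        HasDerivAt f (Real.exp s * ((u s - v s) + (deriv u s - deriv v s))) s := by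
      intro s hs
      have hs' := hint hs
      have h1 : HasDerivAt (fun x => u x - v x) (deriv u s - deriv v s) s :=
        ((hu_diff s hs').hasDerivAt).sub ((hv_diff s hs').hasDerivAt)
      have h2 : HasDerivAt Real.exp (Real.exp s) s := Real.hasDerivAt_exp s
      have : HasDerivAt (fun y => Real.exp y * (u y - v y))
          (Real.exp s * (u s - v s) + Real.exp s * (deriv u s - deriv v s)) s := h2.mul h1
      convert this using 1
      ring
    have hfa : AntitoneOn f (Icc a t) := by
      apply antitoneOn_of_deriv_nonpos (convex_Icc a t) hfc
      · intro s hs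
        exact (hderiv s hs).differentiableAt.differentiableWithinAt
      · intro s hs
        rw [(hderiv s hs).deriv]
        have hs' := hint hs
        rw [interior_Icc] at hs
        -- s - τ is in the initial-&-known region
        have hsτmem : s - τ ∈ Icc (-τ) T := by
          constructor <;> [linarith [hs.1]; linarith [hs.2, hτ.le]]
        have huv : u (s - τ) ≤ v (s - τ) := by
          apply hyp _ hsτmem
          linarith [hs.2]
        have hgle : g (u (s - τ)) ≤ g (v (s - τ)) := hg.monotone huv
        have h1 := hsub s hs'
        have h2 := hsup s hs'
        have : (u s - v s) + (deriv u s - deriv v s) ≤ 0 := by linarith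
        exact mul_nonpos_of_nonneg_of_nonpos (Real.exp_pos s).le this
    have haam : a ∈ Icc a t := ⟨le_refl a, hcase.le⟩
    have htm : t ∈ Icc a t := ⟨hcase.le, le_refl t⟩
    have hfle : f t ≤ f a := hfa haam htm hcase.le
    have hfa0 : f a ≤ 0 := by
      have : u a ≤ v a := hyp a ⟨by linarith, haT⟩ le_rfl
      have := sub_nonpos.mpr this
      exact mul_nonpos_of_nonneg_of_nonpos (Real.exp_pos a).le this
    have : Real.exp t * (u t - v t) ≤ 0 := le_trans hfle hfa0
    nlinarith [Real.exp_pos t]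
  -- Induction on the number of delay steps.
  have main : ∀ n : ℕ, ∀ t ∈ Icc (-τ) T, t ≤ n * τ → u t ≤ v t := by
    intro n
    induction n with
    | zero =>
      intro t ht h0
      simp at h0
      exact hinit t ⟨ht.1, h0⟩
    | succ n ih =>
      intro t ht hle
      apply key (n * τ) (by positivity) ih t ht
      push_cast at hle ⊢
      linarith
  intro t ht
  obtain ⟨n, hn⟩ := exists_nat_ge (T / τ)
  have : T ≤ n * τ := by
    rw [div_le_iff₀ hτ] at hn
    linarith
  exact main n t ht (le_trans ht.2 this)
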